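/- Every Hausdorff locally compact ring topology on End(A) is discrete. Equivalently, the endomorphism ring of a countable elementary abelian p-group does not admit a nondiscrete Hausdorff locally compact ring topology. -/

import Mathlib

open Finsupp Set Function

namespace EndLCAux

variable (p : ℕ)

/-- Projection of `ℕ →₀ ZMod p` onto the coordinate `c`. -/
noncomputable def Pc (c : ℕ) : Module.End (ZMod p) (ℕ →₀ ZMod p) :=
  (Finsupp.lsingle c).comp (Finsupp.lapply c)

/-- The shift endomorphism of `ℕ →₀ ZMod p`. -/
noncomputable def sh : Module.End (ZMod p) (ℕ →₀ ZMod p) :=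
  Finsupp.lmapDomain (ZMod p) (ZMod p) (· + 1)

variable {p}

lemma Pc_apply (c : ℕ) (v : ℕ →₀ ZMod p) : Pc p c v = Finsupp.single c (v c) := rfl

lemma mul_Pc_apply (x : Module.End (ZMod p) (ℕ →₀ ZMod p)) (c : ℕ) (v : ℕ →₀ ZMod p) :
    (x * Pc p c) v = v c • x (Finsupp.single c 1) := by
  rw [Module.End.mul_apply, Pc_apply, ← map_smul, Finsupp.smul_single, smul_eq_mul, mul_one]

lemma eq_zero_of_forall_col {x : Module.End (ZMod p) (ℕ →₀ ZMod p)}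
    (h : ∀ c, x * Pc p c = 0) : x = 0 := by
  apply Finsupp.lhom_ext
  intro a b
  have := congrArg (fun f : Module.End (ZMod p) (ℕ →₀ ZMod p) => f (Finsupp.single a b)) (h a)
  simpa [Module.End.mul_apply, Pc_apply, Finsupp.single_eq_same] using this

lemma Pc_idem (c : ℕ) : Pc p c * Pc p c = (Pc p c : Module.End (ZMod p) (ℕ →₀ ZMod p)) := by
  apply LinearMap.ext
  intro v
  simp [Module.End.mul_apply, Pc_apply, Finsupp.single_eq_same]

lemma sh_apply (w : ℕ →₀ ZMod p) : sh p w = Finsupp.mapDomain (· + 1) w := rfl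

lemma sh_pow_apply (k : ℕ) (w : ℕ →₀ ZMod p) :
    (sh p ^ k) w = Finsupp.mapDomain (· + k) w := by
  induction k generalizing w with
  | zero =>
    show w = _
    have : (fun n : ℕ => n + 0) = id := by funext n; simp
    rw [this, Finsupp.mapDomain_id]
  | succ k ih =>
    have hc : (fun n : ℕ => n + (k + 1)) = (fun n : ℕ => n + k) ∘ (fun n : ℕ => n + 1) := by
      funext n; simp only [Function.comp]; omega
    rw [pow_succ, Module.End.mul_apply]
    show (sh p ^ k) (sh p w) = _
    rw [ih, sh_apply, ← Finsupp.mapDomain_comp, hc]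

lemma sh_pow_inj {w : ℕ →₀ ZMod p} (hw : w ≠ 0) :
    Injective fun k : ℕ => (sh p ^ k) w := by
  have key : ∀ k k' : ℕ, k < k' → (sh p ^ k) w ≠ (sh p ^ k') w := by
    intro k k' hkk h
    set n₀ := w.support.max' (Finsupp.support_nonempty_iff.2 hw) with hn₀
    have hmem : n₀ ∈ w.support := w.support.max'_mem _
    have h4 : w n₀ ≠ 0 := Finsupp.mem_support_iff.1 hmem
    have h1 : (sh p ^ k') w (n₀ + k') = w n₀ := by
      rw [sh_pow_apply, Finsupp.mapDomain_apply (add_left_injective k')]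
    have heq : n₀ + k' = (n₀ + (k' - k)) + k := by omega
    have h2 : (sh p ^ k) w (n₀ + k') = w (n₀ + (k' - k)) := by
      rw [sh_pow_apply, heq, Finsupp.mapDomain_apply (add_left_injective k)]
    have h3 : w (n₀ + (k' - k)) = 0 := by
      by_contra hne
      have : n₀ + (k' - k) ∈ w.support := Finsupp.mem_support_iff.2 hne
      have := w.support.le_max' _ this
      omega
    rw [h, h1] at h2
    exact h4 (h2.trans h3)
  intro k k' h
  rcases lt_trichotomy k k' with hlt | heq | hgt
  · exact absurd h (key _ _ hlt)
  · exact heq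
  · exact absurd h.symm (key _ _ hgt)

end EndLCAux

open Topology in
/-- Abstract core: a Hausdorff locally compact ring topology on a ring `R` that has
a sequence of idempotents `P c` which jointly detect zero, with countable "column"
left ideals, and a "shift" element `s` moving columns injectively, is discrete. -/
private theorem end_lc_abstract (R : Type*) [Ring R] [TopologicalSpace R]
    [IsTopologicalRing R] [T2Space R] [hlc : LocallyCompactSpace R]
    (P : ℕ → R) (s : R)
    (hPidem : ∀ c, P c * P c = P c)
    (hzero : ∀ x : R, (∀ c, x * P c = 0) → x = 0)
    (hcount : ∀ c, Countable {x : R // x * P c = x})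
    (hshift : ∀ (u : R) (c : ℕ), u * P c ≠ 0 →
      Function.Injective fun k : ℕ => s ^ k * u * P c) :
    DiscreteTopology R := by
  classical
  obtain ⟨K, hKnhds, -, hKcomp⟩ := hlc.local_compact_nhds (0 : R) Set.univ Filter.univ_mem
  -- Step 1: in each "column" left ideal, 0 is isolated (Baire category on a countable
  -- closed locally compact subspace).
  have key : ∀ c : ℕ, ∃ O : Set R, IsOpen O ∧ (0 : R) ∈ O ∧
      ∀ x, x * P c = x → x ∈ O → x = 0 := by
    intro c
    set S : Set R := {x | x * P c = x} with hSdef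
    have hcont : Continuous fun x : R => x * P c := continuous_mul_right _
    have hSclosed : IsClosed S := by
      have hSeq : S = (fun x : R => x * P c - x) ⁻¹' {0} := by
        ext x
        exact (sub_eq_zero (a := x * P c) (b := x)).symm
      rw [hSeq]
      exact IsClosed.preimage (hcont.sub continuous_id) isClosed_singleton
    haveI : LocallyCompactSpace S := hSclosed.locallyCompactSpace
    haveI : Countable ↥S := hcount c
    haveI : Nonempty ↥S := ⟨⟨0, by simp [hSdef]⟩⟩
    have hcover : (⋃ i : ↥S, ({i} : Set ↥S)) = Set.univ := by
      ext x; simp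
    obtain ⟨i₀, hi₀⟩ :=
      nonempty_interior_of_iUnion_of_closed (fun i : ↥S => isClosed_singleton) hcover
    have hopen : IsOpen ({i₀} : Set ↥S) := by
      obtain ⟨z, hz⟩ := hi₀
      have hz' : z = i₀ := Set.mem_singleton_iff.1 (interior_subset hz)
      have hint : interior ({i₀} : Set ↥S) = {i₀} :=
        Set.Subset.antisymm interior_subset (Set.singleton_subset_iff.2 (hz' ▸ hz))
      rw [← hint]; exact isOpen_interior
    obtain ⟨O, hOopen, hOpre⟩ := isOpen_induced_iff.1 hopen
    have hi₀O : (i₀ : R) ∈ O := by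
      have h1 : i₀ ∈ (Subtype.val ⁻¹' O : Set ↥S) := by rw [hOpre]; exact rfl
      exact h1
    refine ⟨(fun x => x + (i₀ : R)) ⁻¹' O,
      hOopen.preimage (continuous_add_right _), by simpa using hi₀O, ?_⟩
    intro x hxS hxO
    have hi₀S : (i₀ : R) * P c = ↑i₀ := i₀.2
    have hmem : x + ↑i₀ ∈ S := by
      simp only [hSdef, Set.mem_setOf_eq, add_mul, hxS, hi₀S]
    have h2 : (⟨x + ↑i₀, hmem⟩ : ↥S) ∈ (Subtype.val ⁻¹' O : Set ↥S) := hxO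
    rw [hOpre] at h2
    have h3 : x + (i₀ : R) = ↑i₀ := congrArg Subtype.val (Set.mem_singleton_iff.1 h2)
    exact add_eq_right.1 h3
  -- Step 2: column images of the compact set `K` are finite.
  have colfin : ∀ c : ℕ, Set.Finite ((fun x : R => x * P c) '' K) := by
    intro c
    obtain ⟨O, hOopen, hO0, hOiso⟩ := key c
    set T := (fun x : R => x * P c) '' K with hT
    have hTcomp : IsCompact T := hKcomp.image (continuous_mul_right _)
    have hTS : ∀ z ∈ T, z * P c = z := by
      rintro z ⟨x, -, rfl⟩
      rw [mul_assoc, hPidem]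
    obtain ⟨t, ht⟩ := hTcomp.elim_finite_subcover
      (fun y : ↥T => (fun z => z - (y : R)) ⁻¹' O)
      (fun y => hOopen.preimage (continuous_sub_right _))
      (fun z hz => Set.mem_iUnion.2 ⟨⟨z, hz⟩, by simpa [sub_self] using hO0⟩)
    apply Set.Finite.subset (t.finite_toSet.image (Subtype.val : ↥T → R))
    intro z hz
    obtain ⟨y, hy⟩ := Set.mem_iUnion.1 (ht hz)
    obtain ⟨hys, hzy⟩ := Set.mem_iUnion.1 hy
    have hsub : (z - ↑y) * P c = z - ↑y := by
      rw [sub_mul, hTS z hz, hTS _ y.2]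
    have hz0 : z - (y : R) = 0 := hOiso _ hsub hzy
    exact ⟨y, hys, (sub_eq_zero.1 hz0).symm⟩
  -- The filtration by vanishing of the first `N` columns.
  set V : ℕ → Set R := fun N => {x | ∀ c < N, x * P c = 0} with hV
  have hVnhds : ∀ N, V N ∈ 𝓝 (0 : R) := by
    intro N
    choose O hOopen hO0 hOiso using key
    refine Filter.mem_of_superset (IsOpen.mem_nhds
      (isOpen_biInter_finset (s := Finset.range N)
        (f := fun c => (fun x : R => x * P c) ⁻¹' O c)
        (fun c _ => (hOopen c).preimage (continuous_mul_right _))) ?_) ?_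
    · simp only [Set.mem_iInter, Set.mem_preimage, zero_mul]
      exact fun c _ => hO0 c
    · intro x hx
      simp only [Set.mem_iInter, Set.mem_preimage, Finset.mem_range] at hx
      intro c hc
      exact hOiso c _ (by rw [mul_assoc, hPidem]) (hx c hc)
  have hVclosed : ∀ N, IsClosed (V N) := by
    intro N
    have hVeq : V N = ⋂ c ∈ Finset.range N, (fun x : R => x * P c) ⁻¹' {0} := by
      ext x
      simp [hV]
    rw [hVeq]
    exact isClosed_biInter fun c _ =>
      IsClosed.preimage (continuous_mul_right _) isClosed_singleton
  by_cases hdisc : ∃ N, K ∩ V N ⊆ {0}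
  · -- basic neighborhoods eventually trivial: the topology is discrete
    obtain ⟨N, hN⟩ := hdisc
    have h0 : ({0} : Set R) ∈ 𝓝 (0 : R) :=
      Filter.mem_of_superset (Filter.inter_mem hKnhds (hVnhds N)) hN
    have hopen0 : IsOpen ({0} : Set R) := by
      obtain ⟨U, hU1, hU2, hU3⟩ := mem_nhds_iff.1 h0
      have hUeq : U = {0} := Set.Subset.antisymm hU1 (Set.singleton_subset_iff.2 hU3)
      rw [← hUeq]; exact hU2
    rw [discreteTopology_iff_isOpen_singleton]
    intro a
    have himg := (Homeomorph.addLeft a).isOpen_image.2 hopen0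
    simpa using himg
  · exfalso
    push_neg at hdisc
    have hKclosed : IsClosed K := hKcomp.isClosed
    -- continuity of left multiplication by the shift gives a level `M` kept inside `K`
    have hW : (fun y => s * y) ⁻¹' interior K ∈ 𝓝 (0 : R) := by
      refine IsOpen.mem_nhds (isOpen_interior.preimage (continuous_mul_left _)) ?_
      simpa using mem_interior_iff_mem_nhds.2 hKnhds
    have hMex : ∃ M, ∀ y ∈ K ∩ V M, s * y ∈ K := by
      by_contra hcon
      push_neg at hcon
      set F : ℕ → Set R :=
        fun N => (K ∩ V N) ∩ ((fun y => s * y) ⁻¹' interior K)ᶜ with hF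
      have hFne : ∀ N, (F N).Nonempty := by
        intro N
        obtain ⟨y, hy1, hy2⟩ := hcon N
        exact ⟨y, hy1, fun hyW => hy2 (interior_subset hyW)⟩
      have hFclosed : ∀ N, IsClosed (F N) := fun N =>
        (hKclosed.inter (hVclosed N)).inter
          (isOpen_interior.preimage (continuous_mul_left _)).isClosed_compl
      have hFdec : ∀ N, F (N + 1) ⊆ F N := by
        intro N x hx
        exact ⟨⟨hx.1.1, fun c hc => hx.1.2 c (Nat.lt_succ_of_lt hc)⟩, hx.2⟩
      have hF0 : IsCompact (F 0) :=
        hKcomp.of_isClosed_subset (hFclosed 0) (fun x hx => hx.1.1)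
      obtain ⟨x, hx⟩ := IsCompact.nonempty_iInter_of_sequence_nonempty_isCompact_isClosed
        F hFdec hFne hF0 hFclosed
      have hx0 : x = 0 := by
        apply hzero
        intro c
        exact (Set.mem_iInter.1 hx (c + 1)).1.2 c (Nat.lt_succ_self c)
      have hxc : x ∈ ((fun y => s * y) ⁻¹' interior K)ᶜ := (Set.mem_iInter.1 hx 0).2
      apply hxc
      rw [hx0]
      exact mem_of_mem_nhds hW
    obtain ⟨M, hM⟩ := hMex
    obtain ⟨u, huKV, hu0⟩ := Set.not_subset.1 (hdisc M)
    have hu0' : u ≠ 0 := by simpa using hu0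
    have hex : ∃ c, u * P c ≠ 0 := by
      by_contra hcon
      push_neg at hcon
      exact hu0' (hzero u hcon)
    set c := Nat.find hex with hc
    have hcspec : u * P c ≠ 0 := Nat.find_spec hex
    have hcmin : ∀ c' < c, u * P c' = 0 := fun c' h => not_not.1 (Nat.find_min hex h)
    have hcM : M ≤ c := by
      by_contra hlt
      exact hcspec (huKV.2 c (by omega))
    have hiter : ∀ k, (s ^ k * u) ∈ K ∧ ∀ c' < c, (s ^ k * u) * P c' = 0 := by
      intro k
      induction k with
      | zero =>
        simpa using ⟨huKV.1, hcmin⟩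
      | succ k ih =>
        have h1 : s ^ (k + 1) * u = s * (s ^ k * u) := by
          rw [pow_succ', mul_assoc]
        refine ⟨?_, ?_⟩
        · rw [h1]
          exact hM _ ⟨ih.1, fun c' hc' => ih.2 c' (lt_of_lt_of_le hc' hcM)⟩
        · intro c' hc'
          rw [h1, mul_assoc, ih.2 c' hc', mul_zero]
    have hmem : ∀ k : ℕ, s ^ k * u * P c ∈ (fun x : R => x * P c) '' K :=
      fun k => ⟨_, (hiter k).1, rfl⟩
    exact (Set.not_infinite.2 (colfin c))
      (Set.infinite_of_injective_forall_mem (hshift u c hcspec) hmem)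

namespace EndLCAux

lemma col_countable (p c : ℕ) [Fact p.Prime] :
    Countable {x : Module.End (ZMod p) (ℕ →₀ ZMod p) // x * Pc p c = x} := by
  haveI : NeZero p := ⟨(Fact.out : p.Prime).ne_zero⟩
  refine Function.Injective.countable
    (f := fun x : {x : Module.End (ZMod p) (ℕ →₀ ZMod p) // x * Pc p c = x} =>
      (x : Module.End (ZMod p) (ℕ →₀ ZMod p)) (Finsupp.single c 1)) ?_
  rintro ⟨x, hx⟩ ⟨y, hy⟩ hxy
  simp only at hxy
  apply Subtype.ext
  apply LinearMap.ext
  intro v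
  have hx' := congrArg (fun f : Module.End (ZMod p) (ℕ →₀ ZMod p) => f v) hx
  have hy' := congrArg (fun f : Module.End (ZMod p) (ℕ →₀ ZMod p) => f v) hy
  rw [← hx', ← hy', mul_Pc_apply, mul_Pc_apply, hxy]

lemma shift_inj {p : ℕ} (u : Module.End (ZMod p) (ℕ →₀ ZMod p)) (c : ℕ)
    (h : u * Pc p c ≠ 0) :
    Function.Injective fun k : ℕ => sh p ^ k * u * Pc p c := by
  have hw : u (Finsupp.single c (1 : ZMod p)) ≠ 0 := by
    intro hww
    apply h
    apply LinearMap.ext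
    intro v
    rw [mul_Pc_apply, hww, smul_zero]
    rfl
  intro k k' hkk
  have h2 := congrArg
    (fun f : Module.End (ZMod p) (ℕ →₀ ZMod p) => f (Finsupp.single c (1 : ZMod p))) hkk
  have h3 : (sh p ^ k) (u (Finsupp.single c 1)) = (sh p ^ k') (u (Finsupp.single c 1)) := by
    simpa [Module.End.mul_apply, Pc_apply, Finsupp.single_eq_same] using h2
  exact sh_pow_inj hw h3

end EndLCAux

open EndLCAux in
/-- The endomorphism ring of a countable elementary abelian `p`-group does not
admit a nondiscrete Hausdorff locally compact ring topology: every Hausdorff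
locally compact ring topology on it is discrete. -/
theorem end_locallyCompact_discrete (p : ℕ) [Fact p.Prime]
    (t : TopologicalSpace (Module.End (ZMod p) (ℕ →₀ ZMod p)))
    (htr : @IsTopologicalRing (Module.End (ZMod p) (ℕ →₀ ZMod p)) t _)
    (ht2 : @T2Space (Module.End (ZMod p) (ℕ →₀ ZMod p)) t)
    (hlc : @LocallyCompactSpace (Module.End (ZMod p) (ℕ →₀ ZMod p)) t) :
    @DiscreteTopology (Module.End (ZMod p) (ℕ →₀ ZMod p)) t :=
  @end_lc_abstract (Module.End (ZMod p) (ℕ →₀ ZMod p)) _ t htr ht2 hlc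
    (Pc p) (sh p) (fun c => Pc_idem c) (fun _ h => eq_zero_of_forall_col h)
    (fun c => col_countable p c) (fun u c h => shift_inj u c h)
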